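/- Let z₀ be a point of Lebesgue density 1 of a measurable set U ⊆ ℝ^{2d}. Then for all sufficiently small δ > 0, the set V of points (x,y) in the open cube z₀ + (-δ,0)^d × (-δ,0)^d such that (x,y), (x+δΔ,y), (x,y+δΔ), (x+δΔ,y+δΔ) all lie in U has positive Lebesgue measure. -/
import Mathlib


open MeasureTheory Set Metric ENNReal

/-- If `z₀` is a point of Lebesgue density 1 of a measurable set `U ⊆ ℝ^d × ℝ^d`,
then for all sufficiently small `δ > 0` the set `V` of points of the open cube
`z₀ + (-δ,0)^d × (-δ,0)^d` all four of whose translates by `0, (δΔ,0), (0,δΔ), (δΔ,δΔ)`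
lie in `U` has positive measure. -/
theorem stmt1 (d : ℕ) (U : Set ((Fin d → ℝ) × (Fin d → ℝ))) (hU : MeasurableSet U)
    (z₀ : (Fin d → ℝ) × (Fin d → ℝ))
    (hdens : Filter.Tendsto
      (fun r : ℝ => volume (U ∩ Metric.ball z₀ r) / volume (Metric.ball z₀ r))
      (nhdsWithin 0 (Set.Ioi 0)) (nhds 1)) :
    ∃ δ₀ > (0:ℝ), ∀ δ : ℝ, 0 < δ → δ < δ₀ →
      0 < volume {p : (Fin d → ℝ) × (Fin d → ℝ) |
        (∀ i, z₀.1 i - δ < p.1 i ∧ p.1 i < z₀.1 i) ∧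
        (∀ i, z₀.2 i - δ < p.2 i ∧ p.2 i < z₀.2 i) ∧
        p ∈ U ∧
        (p.1 + δ • (fun _ => (1:ℝ)), p.2) ∈ U ∧
        (p.1, p.2 + δ • (fun _ => (1:ℝ))) ∈ U ∧
        (p.1 + δ • (fun _ => (1:ℝ)), p.2 + δ • (fun _ => (1:ℝ))) ∈ U} := by
  classical
  haveI hinv : (volume : Measure ((Fin d → ℝ) × (Fin d → ℝ))).IsAddLeftInvariant := by
    rw [Measure.volume_eq_prod]; infer_instance
  set ε : ℝ≥0∞ := (2 * 4 * 4 ^ d)⁻¹ with hεdef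
  have h4d0 : ((4:ℝ≥0∞)) ^ d ≠ 0 := pow_ne_zero d (by norm_num)
  have h4dtop : ((4:ℝ≥0∞)) ^ d ≠ ⊤ := ENNReal.pow_ne_top (by norm_num)
  have hε0 : ε ≠ 0 := by
    rw [hεdef]
    simp only [ne_eq, ENNReal.inv_eq_zero]
    exact ENNReal.mul_ne_top (by norm_num) h4dtop
  have h1 : ∀ᶠ r in nhdsWithin 0 (Set.Ioi 0),
      1 - ε < volume (U ∩ Metric.ball z₀ r) / volume (Metric.ball z₀ r) :=
    hdens.eventually (eventually_gt_nhds
      (ENNReal.sub_lt_self ENNReal.one_ne_top one_ne_zero hε0))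
  rw [eventually_nhdsWithin_iff, Metric.eventually_nhds_iff] at h1
  obtain ⟨δ₀, hδ₀, h1⟩ := h1
  refine ⟨δ₀, hδ₀, fun δ hδ hδδ₀ => ?_⟩
  have hr : 1 - ε < volume (U ∩ Metric.ball z₀ δ) / volume (Metric.ball z₀ δ) :=
    h1 (by rw [Real.dist_eq, sub_zero, abs_of_pos hδ]; exact hδδ₀) hδ
  set a : ℝ≥0∞ := ENNReal.ofReal δ with hadef
  have ha0 : a ≠ 0 := by
    rw [hadef, ne_eq, ENNReal.ofReal_eq_zero]; linarith
  have hatop : a ≠ ⊤ := ENNReal.ofReal_ne_top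
  set m : ℝ≥0∞ := a ^ d * a ^ d with hmdef
  have hm0 : m ≠ 0 := mul_ne_zero (pow_ne_zero d ha0) (pow_ne_zero d ha0)
  have hmtop : m ≠ ⊤ := ENNReal.mul_ne_top (ENNReal.pow_ne_top hatop) (ENNReal.pow_ne_top hatop)
  -- volume of the ball
  have h2δ : ENNReal.ofReal ((2*δ)^d) = (2*a)^d := by
    rw [ENNReal.ofReal_pow (by linarith : (0:ℝ) ≤ 2*δ), ENNReal.ofReal_mul (by norm_num),
      ENNReal.ofReal_ofNat]
  have hB : volume (Metric.ball z₀ δ) = 4 ^ d * m := by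
    rw [show Metric.ball z₀ δ = Metric.ball (z₀.1, z₀.2) δ by rw [Prod.mk.eta],
      ← ball_prod_same, Measure.volume_eq_prod, Measure.prod_prod,
      Real.volume_pi_ball _ hδ, Real.volume_pi_ball _ hδ, Fintype.card_fin, h2δ, hmdef]
    rw [mul_pow, show (4:ℝ≥0∞) = 2 * 2 by norm_num, mul_pow]
    ring
  have hB0 : volume (Metric.ball z₀ δ) ≠ 0 := by rw [hB]; exact mul_ne_zero h4d0 hm0
  have hBtop : volume (Metric.ball z₀ δ) ≠ ⊤ := by rw [hB]; exact ENNReal.mul_ne_top h4dtop hmtop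
  -- the cube
  set Q : Set ((Fin d → ℝ) × (Fin d → ℝ)) :=
    (univ.pi fun i => Ioo (z₀.1 i - δ) (z₀.1 i)) ×ˢ (univ.pi fun i => Ioo (z₀.2 i - δ) (z₀.2 i))
    with hQdef
  have hQ : volume Q = m := by
    rw [hQdef, Measure.volume_eq_prod, Measure.prod_prod, volume_pi_pi, volume_pi_pi]
    simp [Real.volume_Ioo, _root_.sub_sub_cancel, hmdef, hadef, Finset.prod_const]
  -- the bad-set bound
  have hUB : (1 - ε) * volume (Metric.ball z₀ δ) ≤ volume (U ∩ Metric.ball z₀ δ) :=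
    ((ENNReal.lt_div_iff_mul_lt (Or.inl hB0) (Or.inl hBtop)).mp hr).le
  have hdiff : volume (Metric.ball z₀ δ \ U) ≤ ε * volume (Metric.ball z₀ δ) := by
    have he : Metric.ball z₀ δ \ U = Metric.ball z₀ δ \ (U ∩ Metric.ball z₀ δ) := by
      ext p; simp only [mem_diff, mem_inter_iff, not_and]; tauto
    rw [he, measure_diff inter_subset_right (hU.inter measurableSet_ball).nullMeasurableSet
      (ne_top_of_le_ne_top hBtop (measure_mono inter_subset_right)), tsub_le_iff_right]
    calc volume (Metric.ball z₀ δ) = 1 * volume (Metric.ball z₀ δ) := (one_mul _).symm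
      _ ≤ (ε + (1 - ε)) * volume (Metric.ball z₀ δ) := by gcongr; exact le_add_tsub
      _ = ε * volume (Metric.ball z₀ δ) + (1 - ε) * volume (Metric.ball z₀ δ) := add_mul _ _ _
      _ ≤ ε * volume (Metric.ball z₀ δ) + volume (U ∩ Metric.ball z₀ δ) := by gcongr
  -- ball as a box
  have hball : Metric.ball z₀ δ =
      (univ.pi fun i => Ioo (z₀.1 i - δ) (z₀.1 i + δ)) ×ˢ
        (univ.pi fun i => Ioo (z₀.2 i - δ) (z₀.2 i + δ)) := by
    rw [show Metric.ball z₀ δ = Metric.ball (z₀.1, z₀.2) δ by rw [Prod.mk.eta],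
      ← ball_prod_same, ball_pi _ hδ, ball_pi _ hδ]
    simp [Real.ball_eq_Ioo]
  -- key translate bound
  have key : ∀ w : (Fin d → ℝ) × (Fin d → ℝ),
      (∀ i, w.1 i = 0 ∨ w.1 i = δ) → (∀ i, w.2 i = 0 ∨ w.2 i = δ) →
      volume (Q \ ((fun p => w + p) ⁻¹' U)) ≤ ε * volume (Metric.ball z₀ δ) := by
    intro w hw1 hw2
    have hsub : Q \ ((fun p => w + p) ⁻¹' U) ⊆
        (fun p => w + p) ⁻¹' (Metric.ball z₀ δ \ U) := by
      rintro ⟨x, y⟩ ⟨hpq, hnU⟩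
      rw [hQdef, Set.mem_prod] at hpq
      refine ⟨?_, hnU⟩
      rw [hball]
      constructor
      · intro i _
        have h := hpq.1 i (mem_univ i)
        rw [mem_Ioo] at h
        have : ((w + (x, y)).1) i = w.1 i + x i := rfl
        rw [this, mem_Ioo]
        rcases hw1 i with hwi | hwi <;> rw [hwi] <;> constructor <;> linarith [h.1, h.2]
      · intro i _
        have h := hpq.2 i (mem_univ i)
        rw [mem_Ioo] at h
        have : ((w + (x, y)).2) i = w.2 i + y i := rfl
        rw [this, mem_Ioo]
        rcases hw2 i with hwi | hwi <;> rw [hwi] <;> constructor <;> linarith [h.1, h.2]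
    calc volume (Q \ ((fun p => w + p) ⁻¹' U))
        ≤ volume ((fun p => w + p) ⁻¹' (Metric.ball z₀ δ \ U)) := measure_mono hsub
      _ = volume (Metric.ball z₀ δ \ U) := measure_preimage_add volume w _
      _ ≤ ε * volume (Metric.ball z₀ δ) := hdiff
  -- the four translates
  set Δd : Fin d → ℝ := δ • (fun _ => (1:ℝ)) with hΔdef
  have hΔi : ∀ i, Δd i = δ := fun i => by simp [hΔdef]
  set w₀ : (Fin d → ℝ) × (Fin d → ℝ) := (0, 0) with hw₀
  set w₁ : (Fin d → ℝ) × (Fin d → ℝ) := (Δd, 0) with hw₁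
  set w₂ : (Fin d → ℝ) × (Fin d → ℝ) := (0, Δd) with hw₂
  set w₃ : (Fin d → ℝ) × (Fin d → ℝ) := (Δd, Δd) with hw₃
  have hz : ∀ i, (0 : Fin d → ℝ) i = 0 := fun _ => rfl
  have hkey₀ := key w₀ (fun i => Or.inl rfl) (fun i => Or.inl rfl)
  have hkey₁ := key w₁ (fun i => Or.inr (hΔi i)) (fun i => Or.inl rfl)
  have hkey₂ := key w₂ (fun i => Or.inl rfl) (fun i => Or.inr (hΔi i))
  have hkey₃ := key w₃ (fun i => Or.inr (hΔi i)) (fun i => Or.inr (hΔi i))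
  set S : Set ((Fin d → ℝ) × (Fin d → ℝ)) := {p : (Fin d → ℝ) × (Fin d → ℝ) |
        (∀ i, z₀.1 i - δ < p.1 i ∧ p.1 i < z₀.1 i) ∧
        (∀ i, z₀.2 i - δ < p.2 i ∧ p.2 i < z₀.2 i) ∧
        p ∈ U ∧
        (p.1 + δ • (fun _ => (1:ℝ)), p.2) ∈ U ∧
        (p.1, p.2 + δ • (fun _ => (1:ℝ))) ∈ U ∧
        (p.1 + δ • (fun _ => (1:ℝ)), p.2 + δ • (fun _ => (1:ℝ))) ∈ U} with hSdef
  have ht₀ : ∀ p : (Fin d → ℝ) × (Fin d → ℝ), w₀ + p = p := fun p => zero_add p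
  have ht₁ : ∀ p : (Fin d → ℝ) × (Fin d → ℝ),
      w₁ + p = (p.1 + δ • (fun _ => (1:ℝ)), p.2) := fun p =>
    Prod.ext (add_comm _ _) (zero_add _)
  have ht₂ : ∀ p : (Fin d → ℝ) × (Fin d → ℝ),
      w₂ + p = (p.1, p.2 + δ • (fun _ => (1:ℝ))) := fun p =>
    Prod.ext (zero_add _) (add_comm _ _)
  have ht₃ : ∀ p : (Fin d → ℝ) × (Fin d → ℝ),
      w₃ + p = (p.1 + δ • (fun _ => (1:ℝ)), p.2 + δ • (fun _ => (1:ℝ))) := fun p =>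
    Prod.ext (add_comm _ _) (add_comm _ _)
  -- cover
  have hcover : Q ⊆ S ∪ ((Q \ ((fun p => w₀ + p) ⁻¹' U)) ∪ ((Q \ ((fun p => w₁ + p) ⁻¹' U)) ∪
      ((Q \ ((fun p => w₂ + p) ⁻¹' U)) ∪ (Q \ ((fun p => w₃ + p) ⁻¹' U))))) := by
    intro p hp
    by_cases h0 : w₀ + p ∈ U
    · by_cases hh1 : w₁ + p ∈ U
      · by_cases h2 : w₂ + p ∈ U
        · by_cases h3 : w₃ + p ∈ U
          · left
            have hpq := hp
            rw [hQdef, Set.mem_prod] at hpq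
            refine ⟨fun i => ?_, fun i => ?_, ?_, ?_, ?_, ?_⟩
            · have h := hpq.1 i (mem_univ i); rwa [mem_Ioo] at h
            · have h := hpq.2 i (mem_univ i); rwa [mem_Ioo] at h
            · rw [← ht₀ p]; exact h0
            · rw [← ht₁ p]; exact hh1
            · rw [← ht₂ p]; exact h2
            · rw [← ht₃ p]; exact h3
          · exact Or.inr (Or.inr (Or.inr (Or.inr ⟨hp, h3⟩)))
        · exact Or.inr (Or.inr (Or.inr (Or.inl ⟨hp, h2⟩)))
      · exact Or.inr (Or.inr (Or.inl ⟨hp, hh1⟩))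
    · exact Or.inr (Or.inl ⟨hp, h0⟩)
  -- final computation
  have hcalc : (4:ℝ≥0∞) * (ε * (4 ^ d * m)) = 2⁻¹ * m := by
    rw [hεdef, ENNReal.mul_inv (by norm_num) (Or.inr h4d0),
      ENNReal.mul_inv (by norm_num) (by norm_num)]
    have h4 : (4:ℝ≥0∞) * 4⁻¹ = 1 := ENNReal.mul_inv_cancel (by norm_num) (by norm_num)
    have h4d : (4:ℝ≥0∞) ^ d * (4 ^ d)⁻¹ = 1 := ENNReal.mul_inv_cancel h4d0 h4dtop
    calc (4:ℝ≥0∞) * (2⁻¹ * 4⁻¹ * (4 ^ d)⁻¹ * (4 ^ d * m))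
        = 2⁻¹ * m * ((4:ℝ≥0∞) * 4⁻¹) * ((4:ℝ≥0∞) ^ d * (4 ^ d)⁻¹) := by ring
      _ = 2⁻¹ * m := by rw [h4, h4d, mul_one, mul_one]
  rw [pos_iff_ne_zero]
  intro hS0
  have hle : m ≤ 2⁻¹ * m := by
    calc m = volume Q := hQ.symm
      _ ≤ volume (S ∪ ((Q \ ((fun p => w₀ + p) ⁻¹' U)) ∪ ((Q \ ((fun p => w₁ + p) ⁻¹' U)) ∪
          ((Q \ ((fun p => w₂ + p) ⁻¹' U)) ∪ (Q \ ((fun p => w₃ + p) ⁻¹' U)))))) :=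
        measure_mono hcover
      _ ≤ volume S + (volume (Q \ ((fun p => w₀ + p) ⁻¹' U)) +
          (volume (Q \ ((fun p => w₁ + p) ⁻¹' U)) +
          (volume (Q \ ((fun p => w₂ + p) ⁻¹' U)) + volume (Q \ ((fun p => w₃ + p) ⁻¹' U))))) := by
        refine (measure_union_le _ _).trans ?_
        gcongr
        refine (measure_union_le _ _).trans ?_
        gcongr
        refine (measure_union_le _ _).trans ?_
        gcongr
        exact measure_union_le _ _
      _ ≤ 0 + (ε * volume (Metric.ball z₀ δ) + (ε * volume (Metric.ball z₀ δ) +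
          (ε * volume (Metric.ball z₀ δ) + ε * volume (Metric.ball z₀ δ)))) := by
        rw [hS0]
        exact add_le_add le_rfl (add_le_add hkey₀ (add_le_add hkey₁ (add_le_add hkey₂ hkey₃)))
      _ = 4 * (ε * (4 ^ d * m)) := by rw [hB]; ring
      _ = 2⁻¹ * m := hcalc
  have hhalf : 2⁻¹ * m < m := by
    rw [mul_comm, ← div_eq_mul_inv]
    exact ENNReal.half_lt_self hm0 hmtop
  exact absurd hle (not_le.mpr hhalf)
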